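/- arXiv:2105.14410 — 5 statements merged into one kernel-verified Lean document; each statement's English description precedes it below -/
import Mathlib

section
/- A real square matrix A is real diagonalizable if and only if there exists a symmetric positive definite matrix A₀ such that A₀A is symmetric. -/
open Matrix

lemma aux_ct_eq_t {n : ℕ} (P : Matrix (Fin n) (Fin n) ℝ) : Pᴴ = Pᵀ :=
  Matrix.conjTranspose_eq_transpose_of_trivial P

lemma aux_posDef_transpose_mul_self {n : ℕ} (P : Matrix (Fin n) (Fin n) ℝ)
    (hP : IsUnit P.det) : (Pᵀ * P).PosDef := by
  rw [← aux_ct_eq_t]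
  have h := Matrix.posSemidef_conjTranspose_mul_self P
  refine Matrix.posDef_iff_dotProduct_mulVec.mpr ⟨h.1, fun x hx => ?_⟩
  have hPx : P *ᵥ x ≠ 0 := by
    intro h0
    apply hx
    have := congrArg (fun v => P⁻¹ *ᵥ v) h0
    simpa [Matrix.mulVec_mulVec, Matrix.nonsing_inv_mul P hP] using this
  have key : star x ⬝ᵥ ((Pᴴ * P) *ᵥ x) = star (P *ᵥ x) ⬝ᵥ (P *ᵥ x) := by
    rw [← Matrix.mulVec_mulVec, Matrix.dotProduct_mulVec, Matrix.star_mulVec]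
  rw [key]
  exact Matrix.dotProduct_star_self_pos_iff.mpr hPx

/-- A real square matrix is real diagonalizable: `A = P⁻¹ D P` with `P` invertible and `D` diagonal. -/
def RealDiagonalizable {n : ℕ} (A : Matrix (Fin n) (Fin n) ℝ) : Prop :=
  ∃ P D : Matrix (Fin n) (Fin n) ℝ, IsUnit P.det ∧ D.IsDiag ∧ A = P⁻¹ * D * P

/-- A real square matrix `A` is real diagonalizable iff there exists a symmetric positive
definite matrix `A₀` (a symmetrizer) such that `A₀ * A` is symmetric. -/
theorem realDiagonalizable_iff_exists_symmetrizer {n : ℕ} (A : Matrix (Fin n) (Fin n) ℝ) :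
    RealDiagonalizable A ↔
      ∃ A₀ : Matrix (Fin n) (Fin n) ℝ, A₀.PosDef ∧ (A₀ * A).IsSymm := by
  constructor
  · rintro ⟨P, D, hP, hD, rfl⟩
    refine ⟨Pᵀ * P, aux_posDef_transpose_mul_self P hP, ?_⟩
    have hPP : P * P⁻¹ = 1 := Matrix.mul_nonsing_inv P hP
    have key : Pᵀ * P * (P⁻¹ * D * P) = Pᵀ * D * P := by
      calc Pᵀ * P * (P⁻¹ * D * P) = Pᵀ * ((P * P⁻¹) * (D * P)) := by simp only [mul_assoc]
        _ = Pᵀ * D * P := by rw [hPP, one_mul, mul_assoc]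
    rw [key]
    unfold Matrix.IsSymm
    rw [Matrix.transpose_mul, Matrix.transpose_mul, Matrix.transpose_transpose,
      hD.isSymm, mul_assoc]
  · rintro ⟨A₀, h₀, hS⟩
    have hps := h₀.posSemidef
    open scoped MatrixOrder in set B := CFC.sqrt A₀ with hBdef
    open scoped MatrixOrder in have hBB : B * B = A₀ := CFC.sqrt_mul_sqrt_self A₀ hps.nonneg
    open scoped MatrixOrder in have hBH : B.IsHermitian := (CFC.sqrt_nonneg A₀).posSemidef.1
    have hA₀det : IsUnit A₀.det := isUnit_iff_ne_zero.mpr h₀.det_pos.ne'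
    have hBdet : IsUnit B.det := by
      rw [isUnit_iff_ne_zero]
      intro h0
      apply h₀.det_pos.ne'
      rw [← hBB, Matrix.det_mul, h0, mul_zero]
    have hBinvH : (B⁻¹)ᴴ = B⁻¹ := by
      rw [Matrix.conjTranspose_nonsing_inv, hBH.eq]
    have hM : (B⁻¹ * (A₀ * A) * B⁻¹).IsHermitian := by
      unfold Matrix.IsHermitian
      rw [Matrix.conjTranspose_mul, Matrix.conjTranspose_mul, hBinvH,
        aux_ct_eq_t, hS.eq]
      simp only [mul_assoc]
    set U : Matrix (Fin n) (Fin n) ℝ := (hM.eigenvectorUnitary : Matrix (Fin n) (Fin n) ℝ) with hUdef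
    have hU1 : star U * U = 1 := Matrix.UnitaryGroup.star_mul_self _
    have hU2 : U * star U = 1 := Matrix.mem_unitaryGroup_iff.mp hM.eigenvectorUnitary.2
    have hspec : B⁻¹ * (A₀ * A) * B⁻¹
        = U * diagonal (RCLike.ofReal ∘ hM.eigenvalues) * star U := hM.spectral_theorem
    refine ⟨star U * B, diagonal (RCLike.ofReal ∘ hM.eigenvalues), ?_, Matrix.isDiag_diagonal _, ?_⟩
    · rw [Matrix.det_mul]
      exact (IsUnit.of_mul_eq_one _ (by rw [← Matrix.det_mul, hU1, Matrix.det_one])).mul hBdet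
    · have hUinv : (star U)⁻¹ = U := Matrix.inv_eq_right_inv hU1
      have hPinv : (star U * B)⁻¹ = B⁻¹ * U := by
        rw [Matrix.mul_inv_rev, hUinv]
      rw [hPinv]
      have hBinvB : B⁻¹ * B = 1 := Matrix.nonsing_inv_mul B hBdet
      have hA₀inv : B⁻¹ * B⁻¹ * A₀ = 1 := by
        rw [← Matrix.mul_inv_rev, hBB, Matrix.nonsing_inv_mul A₀ hA₀det]
      symm
      calc B⁻¹ * U * diagonal (RCLike.ofReal ∘ hM.eigenvalues) * (star U * B)
          = B⁻¹ * (U * diagonal (RCLike.ofReal ∘ hM.eigenvalues) * star U) * B := by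
            simp only [mul_assoc]
        _ = B⁻¹ * (B⁻¹ * (A₀ * A) * B⁻¹) * B := by rw [← hspec]
        _ = (B⁻¹ * B⁻¹ * A₀) * (A * (B⁻¹ * B)) := by simp only [mul_assoc]
        _ = A := by rw [hA₀inv, hBinvB, one_mul, mul_one]
end

section
/- Any real tridiagonal matrix whose corresponding off-diagonal entries have positive products (in particular, all off-diagonal entries positive) is real diagonalizable: there exists a positive diagonal matrix A₀ such that A₀A is symmetric. -/
open Matrix

private noncomputable def symmD {n : ℕ} (A : Matrix (Fin n) (Fin n) ℝ) : ℕ → ℝ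
  | 0 => 1
  | k+1 => if h : k + 1 < n then
      symmD A k * A ⟨k, Nat.lt_of_succ_lt h⟩ ⟨k+1, h⟩ / A ⟨k+1, h⟩ ⟨k, Nat.lt_of_succ_lt h⟩
    else 1

/-- A real tridiagonal matrix whose corresponding off-diagonal entries have positive products
admits a positive diagonal symmetrizer and is real diagonalizable. -/
theorem tridiagonal_posProd_diagonalizable {n : ℕ} (A : Matrix (Fin n) (Fin n) ℝ)
    (htri : ∀ i j : Fin n, ((i : ℕ) + 1 < (j : ℕ) ∨ (j : ℕ) + 1 < (i : ℕ)) → A i j = 0)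
    (hpos : ∀ i j : Fin n, (j : ℕ) = (i : ℕ) + 1 → 0 < A i j * A j i) :
    (∃ d : Fin n → ℝ, (∀ i, 0 < d i) ∧ ((Matrix.diagonal d) * A).IsSymm) ∧
      RealDiagonalizable A := by
  set d : Fin n → ℝ := fun i => symmD A i with hd
  -- positivity of d
  have hDpos : ∀ k : ℕ, 0 < symmD A k := by
    intro k
    induction k with
    | zero => simp [symmD]
    | succ k ih =>
      rw [symmD]
      split
      · next h =>
        have hp := hpos ⟨k, Nat.lt_of_succ_lt h⟩ ⟨k+1, h⟩ rfl
        have : 0 < A ⟨k, Nat.lt_of_succ_lt h⟩ ⟨k+1, h⟩ / A ⟨k+1, h⟩ ⟨k, Nat.lt_of_succ_lt h⟩ := by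
          rcases mul_pos_iff.mp hp with ⟨ha, hb⟩ | ⟨ha, hb⟩
          · exact div_pos ha hb
          · exact div_pos_of_neg_of_neg ha hb
        rw [mul_div_assoc]
        exact mul_pos ih this
      · exact one_pos
  have hdpos : ∀ i, 0 < d i := fun i => hDpos i
  -- key symmetrizing relation
  have hkey : ∀ i j : Fin n, d i * A i j = d j * A j i := by
    have step : ∀ i j : Fin n, (j : ℕ) = (i : ℕ) + 1 → d i * A i j = d j * A j i := by
      intro i j hij
      have hb : A j i ≠ 0 := by
        intro h0
        have := hpos i j hij
        rw [h0, mul_zero] at this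
        exact lt_irrefl _ this
      have hj : (j : ℕ) < n := j.2
      have hjlt : (i : ℕ) + 1 < n := hij ▸ hj
      have hi' : i = ⟨(i : ℕ), Nat.lt_of_succ_lt hjlt⟩ := rfl
      have hj' : j = ⟨(i : ℕ) + 1, hjlt⟩ := by apply Fin.ext; exact hij
      have : d j = d i * A i j / A j i := by
        rw [hd]
        simp only
        rw [hj']
        rw [show symmD A ((i : ℕ) + 1) = _ from rfl, symmD, dif_pos hjlt]
      rw [this, div_mul_cancel₀ _ hb]
    intro i j
    rcases lt_trichotomy (i : ℕ) (j : ℕ) with h | h | h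
    · rcases Nat.lt_or_ge ((i : ℕ) + 1) (j : ℕ) with h2 | h2
      · rw [htri i j (Or.inl h2), htri j i (Or.inr h2), mul_zero, mul_zero]
      · exact step i j (le_antisymm (Nat.succ_le_of_lt h) h2).symm
    · have : i = j := Fin.ext h
      rw [this]
    · rcases Nat.lt_or_ge ((j : ℕ) + 1) (i : ℕ) with h2 | h2
      · rw [htri i j (Or.inr h2), htri j i (Or.inl h2), mul_zero, mul_zero]
      · exact (step j i (le_antisymm (Nat.succ_le_of_lt h) h2).symm).symm
  constructor
  · refine ⟨d, hdpos, ?_⟩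
    rw [Matrix.IsSymm]
    ext i j
    simp only [transpose_apply, diagonal_mul]
    exact hkey j i
  -- diagonalizability
  · set e : Fin n → ℝ := fun i => Real.sqrt (d i) with he
    have hepos : ∀ i, 0 < e i := fun i => Real.sqrt_pos.mpr (hdpos i)
    have hesq : ∀ i, e i * e i = d i := fun i => Real.mul_self_sqrt (hdpos i).le
    have hene : ∀ i, e i ≠ 0 := fun i => (hepos i).ne'
    set B : Matrix (Fin n) (Fin n) ℝ :=
      diagonal e * A * diagonal (fun i => (e i)⁻¹) with hB
    have hBapp : ∀ i j, B i j = e i * A i j * (e j)⁻¹ := by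
      intro i j
      rw [hB, Matrix.mul_diagonal, Matrix.diagonal_mul]
    have hBsymm : ∀ i j, B j i = B i j := by
      intro i j
      rw [hBapp, hBapp]
      have h1 := hkey i j
      rw [← hesq i, ← hesq j] at h1
      have hi := hene i
      have hj := hene j
      field_simp
      linear_combination -h1
    have hHerm : B.IsHermitian := by
      rw [Matrix.IsHermitian]
      ext i j
      rw [Matrix.conjTranspose_apply, star_trivial]
      exact hBsymm i j
    have hspec := hHerm.spectral_theorem
    set U : Matrix (Fin n) (Fin n) ℝ := (hHerm.eigenvectorUnitary : Matrix (Fin n) (Fin n) ℝ)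
      with hU
    set D : Matrix (Fin n) (Fin n) ℝ := diagonal (RCLike.ofReal ∘ hHerm.eigenvalues) with hDdef
    have hUU : star U * U = 1 := (Matrix.mem_unitaryGroup_iff').mp hHerm.eigenvectorUnitary.2
    have hUU' : U * star U = 1 := (Matrix.mem_unitaryGroup_iff).mp hHerm.eigenvectorUnitary.2
    set P : Matrix (Fin n) (Fin n) ℝ := star U * diagonal e with hP
    have hEE : diagonal e * diagonal (fun i => (e i)⁻¹) = 1 := by
      rw [Matrix.diagonal_mul_diagonal]
      rw [show (fun i => e i * (e i)⁻¹) = fun _ => (1:ℝ) by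
        funext i; exact mul_inv_cancel₀ (hene i)]
      exact Matrix.diagonal_one
    have hEE' : diagonal (fun i => (e i)⁻¹) * diagonal e = 1 := by
      rw [Matrix.diagonal_mul_diagonal]
      rw [show (fun i => (e i)⁻¹ * e i) = fun _ => (1:ℝ) by
        funext i; exact inv_mul_cancel₀ (hene i)]
      exact Matrix.diagonal_one
    have hPQ : P * (diagonal (fun i => (e i)⁻¹) * U) = 1 := by
      rw [hP]
      calc star U * diagonal e * (diagonal (fun i => (e i)⁻¹) * U)
          = star U * (diagonal e * diagonal (fun i => (e i)⁻¹)) * U := by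
            simp only [mul_assoc]
        _ = star U * U := by rw [hEE, mul_one]
        _ = 1 := hUU
    have hPinv : P⁻¹ = diagonal (fun i => (e i)⁻¹) * U := Matrix.inv_eq_right_inv hPQ
    refine ⟨P, D, ?_, Matrix.isDiag_diagonal _, ?_⟩
    · exact Matrix.isUnit_det_of_right_inverse hPQ
    · have hBAD : diagonal (fun i => (e i)⁻¹) * B * diagonal e = A := by
        rw [hB]
        calc diagonal (fun i => (e i)⁻¹) * (diagonal e * A * diagonal (fun i => (e i)⁻¹)) *
              diagonal e
            = (diagonal (fun i => (e i)⁻¹) * diagonal e) * A *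
              (diagonal (fun i => (e i)⁻¹) * diagonal e) := by simp only [mul_assoc]
          _ = A := by rw [hEE', one_mul, mul_one]
      rw [hPinv]
      calc A = diagonal (fun i => (e i)⁻¹) * B * diagonal e := hBAD.symm
        _ = diagonal (fun i => (e i)⁻¹) * (U * D * star U) * diagonal e := by
            rw [hspec, Unitary.conjStarAlgAut_apply]
        _ = diagonal (fun i => (e i)⁻¹) * U * D * (star U * diagonal e) := by
            simp only [mul_assoc]
end

section
/- The coefficient matrix A of the P_N closure (as defined by the Legendre recurrence) is real diagonalizable, and all its eigenvalues are real and lie in the interval [−1, 1]. -/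
open Matrix

noncomputable def pnMatrix (N : ℕ) : Matrix (Fin (N + 1)) (Fin (N + 1)) ℝ := fun i j =>
  if (j : ℕ) = (i : ℕ) + 1 then (((i : ℕ) : ℝ) + 1) / (2 * ((i : ℕ) : ℝ) + 1)
  else if (i : ℕ) = (j : ℕ) + 1 then ((i : ℕ) : ℝ) / (2 * ((i : ℕ) : ℝ) + 1)
  else 0

lemma pn_nonneg (N : ℕ) (i j : Fin (N+1)) : 0 ≤ pnMatrix N i j := by
  unfold pnMatrix; split_ifs <;> positivity

lemma pn_key (N : ℕ) (i j : Fin (N+1)) :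
    (2 * ((j : ℕ) : ℝ) + 1) * pnMatrix N j i = (2 * ((i : ℕ) : ℝ) + 1) * pnMatrix N i j := by
  have hi : (0:ℝ) ≤ ((i:ℕ):ℝ) := Nat.cast_nonneg _
  have hj : (0:ℝ) ≤ ((j:ℕ):ℝ) := Nat.cast_nonneg _
  unfold pnMatrix
  split_ifs with h1 h2 h3
  · omega
  · have hc : ((i:ℕ):ℝ) = ((j:ℕ):ℝ) + 1 := by exact_mod_cast h1
    field_simp
    nlinarith [hc]
  · have hc : ((j:ℕ):ℝ) = ((i:ℕ):ℝ) + 1 := by exact_mod_cast h3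
    field_simp
    nlinarith [hc]
  · ring

noncomputable def pnS (N : ℕ) : Fin (N+1) → ℝ := fun i => Real.sqrt (2 * ((i:ℕ):ℝ) + 1)

lemma pnS_pos (N : ℕ) (i : Fin (N+1)) : 0 < pnS N i := by
  apply Real.sqrt_pos.mpr; positivity

lemma pnS_sq (N : ℕ) (i : Fin (N+1)) : pnS N i ^ 2 = 2 * ((i:ℕ):ℝ) + 1 := by
  rw [pnS, Real.sq_sqrt]; positivity

noncomputable def pnB (N : ℕ) : Matrix (Fin (N+1)) (Fin (N+1)) ℝ :=
  diagonal (pnS N) * pnMatrix N * diagonal (fun i => (pnS N i)⁻¹)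

lemma pnB_herm (N : ℕ) : (pnB N).IsHermitian := by
  ext i j
  simp only [conjTranspose_apply, star_trivial, pnB, diagonal_mul, mul_diagonal]
  have hsi := pnS_pos N i
  have hsj := pnS_pos N j
  have key2 : pnS N j ^ 2 * pnMatrix N j i = pnS N i ^ 2 * pnMatrix N i j := by
    rw [pnS_sq, pnS_sq]; exact pn_key N i j
  field_simp
  linear_combination key2

lemma pn_conj (N : ℕ) : ∃ (Q : Matrix (Fin (N+1)) (Fin (N+1)) ℝ) (d : Fin (N+1) → ℝ),
    IsUnit Q.det ∧ Q * pnMatrix N = diagonal d * Q := by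
  have hB := pnB_herm N
  set U : Matrix (Fin (N+1)) (Fin (N+1)) ℝ := ↑(hB.eigenvectorUnitary) with hUdef
  have hUU : star U * U = 1 := UnitaryGroup.star_mul_self hB.eigenvectorUnitary
  set d : Fin (N+1) → ℝ := hB.eigenvalues with hddef
  have hspec : pnB N = U * diagonal d * star U := by
    have := hB.spectral_theorem
    simpa [hddef] using this
  refine ⟨star U * diagonal (pnS N), d, ?_, ?_⟩
  · rw [det_mul]
    have h1 : IsUnit (star U).det := by
      apply IsUnit.of_mul_eq_one U.det
      rw [← det_mul, hUU, det_one]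
    have h2 : IsUnit (diagonal (pnS N)).det := by
      rw [det_diagonal]
      exact isUnit_iff_ne_zero.mpr (Finset.prod_ne_zero_iff.mpr fun i _ => (pnS_pos N i).ne')
    exact h1.mul h2
  · have hinv : diagonal (fun i => (pnS N i)⁻¹) * diagonal (pnS N) = 1 := by
      rw [diagonal_mul_diagonal]
      have : (fun i => (pnS N i)⁻¹ * pnS N i) = fun _ => (1:ℝ) := by
        funext i; exact inv_mul_cancel₀ (pnS_pos N i).ne'
      rw [this, diagonal_one]
    have hSA : diagonal (pnS N) * pnMatrix N = pnB N * diagonal (pnS N) := by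
      rw [pnB, mul_assoc, hinv, mul_one]
    have hUB : star U * pnB N = diagonal d * star U := by
      rw [hspec, ← mul_assoc, ← mul_assoc, hUU, one_mul]
    calc star U * diagonal (pnS N) * pnMatrix N
        = star U * (pnB N * diagonal (pnS N)) := by rw [mul_assoc, hSA]
      _ = star U * pnB N * diagonal (pnS N) := by rw [mul_assoc]
      _ = diagonal d * (star U * diagonal (pnS N)) := by rw [hUB, mul_assoc]

lemma pn_row_sum (N : ℕ) (k : Fin (N+1)) : ∑ j, pnMatrix N k j ≤ 1 := by
  have hk : (0:ℝ) ≤ ((k:ℕ):ℝ) := Nat.cast_nonneg _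
  have hden : (0:ℝ) < 2 * ((k:ℕ):ℝ) + 1 := by positivity
  set c1 : ℝ := (((k:ℕ):ℝ) + 1) / (2 * ((k:ℕ):ℝ) + 1) with hc1
  set c2 : ℝ := ((k:ℕ):ℝ) / (2 * ((k:ℕ):ℝ) + 1) with hc2
  have hsplit : ∀ j : Fin (N+1), pnMatrix N k j =
      (if (j:ℕ) = (k:ℕ) + 1 then c1 else 0) + (if (k:ℕ) = (j:ℕ) + 1 then c2 else 0) := by
    intro j
    unfold pnMatrix
    split_ifs <;> first | omega | ring
  rw [Finset.sum_congr rfl (fun j _ => hsplit j), Finset.sum_add_distrib]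
  have e1 : ∑ j : Fin (N+1), (if (j:ℕ) = (k:ℕ) + 1 then c1 else 0)
      = ∑ m ∈ Finset.range (N+1), (if m = (k:ℕ) + 1 then c1 else 0) :=
    Fin.sum_univ_eq_sum_range (fun m => if m = (k:ℕ) + 1 then c1 else 0) (N+1)
  have e2 : ∑ j : Fin (N+1), (if (k:ℕ) = (j:ℕ) + 1 then c2 else 0)
      = ∑ m ∈ Finset.range (N+1), (if (k:ℕ) = m + 1 then c2 else 0) :=
    Fin.sum_univ_eq_sum_range (fun m => if (k:ℕ) = m + 1 then c2 else 0) (N+1)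
  have hc1nn : 0 ≤ c1 := by rw [hc1]; positivity
  have hc2nn : 0 ≤ c2 := by rw [hc2]; positivity
  have b1 : ∑ m ∈ Finset.range (N+1), (if m = (k:ℕ) + 1 then c1 else 0) ≤ c1 := by
    rw [Finset.sum_ite_eq' (Finset.range (N+1)) ((k:ℕ)+1) (fun _ => c1)]
    split_ifs
    · exact le_rfl
    · exact hc1nn
  have b2 : ∑ m ∈ Finset.range (N+1), (if (k:ℕ) = m + 1 then c2 else 0) ≤ c2 := by
    rcases hn : (k:ℕ) with _ | t
    · have : ∀ m ∈ Finset.range (N+1), (if (0:ℕ) = m + 1 then c2 else 0) = 0 := by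
        intro m _; simp
      rw [Finset.sum_congr rfl this, Finset.sum_const_zero]
      exact hc2nn
    · have hcond : ∀ m : ℕ, ((t + 1 : ℕ) = m + 1) = (m = t) := by
        intro m
        simp only [eq_iff_iff]
        omega
      simp only [hcond]
      rw [Finset.sum_ite_eq' (Finset.range (N+1)) t (fun _ => c2)]
      split_ifs
      · exact le_rfl
      · exact hc2nn
  have hsum : c1 + c2 = 1 := by
    rw [hc1, hc2]
    field_simp
    ring
  calc (∑ j : Fin (N+1), (if (j:ℕ) = (k:ℕ) + 1 then c1 else 0))
        + ∑ j : Fin (N+1), (if (k:ℕ) = (j:ℕ) + 1 then c2 else 0)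
      ≤ c1 + c2 := by rw [e1, e2]; exact add_le_add b1 b2
    _ = 1 := hsum

lemma pn_diag_zero (N : ℕ) (k : Fin (N+1)) : pnMatrix N k k = 0 := by
  unfold pnMatrix
  split_ifs <;> first | omega | rfl

/-- The `P_N` closure matrix is real diagonalizable and all its (complex) eigenvalues are
real and lie in `[-1, 1]`. -/
theorem pn_diagonalizable_and_spectrum (N : ℕ) :
    RealDiagonalizable (pnMatrix N) ∧
      ∀ μ ∈ spectrum ℂ ((pnMatrix N).map (Complex.ofReal)),
        μ.im = 0 ∧ ‖μ‖ ≤ 1 := by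
  obtain ⟨Q, d, hQ, hComm⟩ := pn_conj N
  constructor
  · refine ⟨Q, diagonal d, hQ, isDiag_diagonal d, ?_⟩
    calc pnMatrix N = 1 * pnMatrix N := (one_mul _).symm
      _ = Q⁻¹ * Q * pnMatrix N := by rw [nonsing_inv_mul _ hQ]
      _ = Q⁻¹ * (Q * pnMatrix N) := by rw [mul_assoc]
      _ = Q⁻¹ * (diagonal d * Q) := by rw [hComm]
      _ = Q⁻¹ * diagonal d * Q := by rw [mul_assoc]
  · intro μ hμ
    constructor
    · -- real part via similarity to a real diagonal matrix
      have hfun : ⇑Complex.ofRealHom = Complex.ofReal := rfl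
      have hC : (Q.map Complex.ofReal) * ((pnMatrix N).map Complex.ofReal)
          = ((diagonal d).map Complex.ofReal) * (Q.map Complex.ofReal) := by
        rw [← hfun, ← Matrix.map_mul, ← Matrix.map_mul, hComm]
      have hdet : IsUnit (Q.map Complex.ofReal).det := by
        have h := hQ.map Complex.ofRealHom
        rw [RingHom.map_det] at h
        simpa [RingHom.mapMatrix_apply, hfun] using h
      obtain ⟨u, hu⟩ := (isUnit_iff_isUnit_det _).mpr hdet
      have h1 : (↑u : Matrix (Fin (N+1)) (Fin (N+1)) ℂ) * ((pnMatrix N).map Complex.ofReal)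
          = ((diagonal d).map Complex.ofReal) * (↑u : Matrix (Fin (N+1)) (Fin (N+1)) ℂ) := by
        rw [hu]; exact hC
      have hkey : (pnMatrix N).map Complex.ofReal
          = (↑u⁻¹ : Matrix (Fin (N+1)) (Fin (N+1)) ℂ) * ((diagonal d).map Complex.ofReal)
            * (↑u : Matrix (Fin (N+1)) (Fin (N+1)) ℂ) := by
        rw [mul_assoc, ← h1, ← mul_assoc, Units.inv_mul, one_mul]
      rw [hkey, spectrum.units_conjugate'] at hμ
      rw [Matrix.diagonal_map (by simp)] at hμ
      rw [spectrum_diagonal] at hμ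
      obtain ⟨i, hi⟩ := hμ
      rw [← hi]
      simp
    · -- Gershgorin bound
      have hev : Module.End.HasEigenvalue
          (Matrix.toLin' ((pnMatrix N).map Complex.ofReal)) μ := by
        rw [Module.End.hasEigenvalue_iff_mem_spectrum]
        rw [show Matrix.toLin' ((pnMatrix N).map Complex.ofReal)
            = Matrix.toLinAlgEquiv' ((pnMatrix N).map Complex.ofReal) from rfl]
        rwa [AlgEquiv.spectrum_eq Matrix.toLinAlgEquiv']
      obtain ⟨k, hk⟩ := eigenvalue_mem_ball hev
      rw [Metric.mem_closedBall] at hk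
      have hkk : ((pnMatrix N).map Complex.ofReal) k k = 0 := by
        simp [Matrix.map_apply, pn_diag_zero]
      rw [hkk] at hk
      have habs : ‖μ‖ ≤ ∑ j ∈ Finset.univ.erase k,
          ‖((pnMatrix N).map Complex.ofReal) k j‖ := by
        simpa [Complex.dist_eq] using hk
      refine habs.trans ?_
      have hterm : ∀ j, ‖((pnMatrix N).map Complex.ofReal) k j‖ = pnMatrix N k j := by
        intro j
        simp [Matrix.map_apply, Complex.norm_real, Real.norm_eq_abs,
          abs_of_nonneg (pn_nonneg N k j)]
      calc ∑ j ∈ Finset.univ.erase k, ‖((pnMatrix N).map Complex.ofReal) k j‖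
          = ∑ j ∈ Finset.univ.erase k, pnMatrix N k j :=
            Finset.sum_congr rfl (fun j _ => hterm j)
        _ ≤ ∑ j, pnMatrix N k j :=
            Finset.sum_le_sum_of_subset_of_nonneg (Finset.erase_subset _ _)
              (fun j _ _ => pn_nonneg N k j)
        _ ≤ 1 := pn_row_sum N k
end

section
/- Let A₀ = diag(D, B) be symmetric positive definite with D ∈ ℝ^{(N−2)×(N−2)} diagonal positive and B ∈ ℝ^{3×3} symmetric positive definite, and let Q_U = diag(0, −σ_s·I_N) (first diagonal entry 0, remaining N entries −σ_s) with σ_s ≥ 0. Then A₀Q_U is symmetric negative semi-definite. -/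
open Matrix

/-- For the block-diagonal symmetrizer `A₀ = diag(D, B)` (`D` diagonal on the first `N-2`
indices) and the relaxation Jacobian `Q_U = diag(0, -σ_s I_N)` with `σ_s ≥ 0`, the product
`A₀ Q_U` is symmetric negative semi-definite. -/
theorem symmetrizer_source_dissipative (N : ℕ) (hN : 3 ≤ N) (σs : ℝ) (hσs : 0 ≤ σs)
    (A₀ : Matrix (Fin (N + 1)) (Fin (N + 1)) ℝ)
    (hA₀ : A₀.PosDef)
    (hdiag : ∀ i j : Fin (N + 1), (i : ℕ) < N - 2 → i ≠ j → A₀ i j = 0) :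
    let Q : Matrix (Fin (N + 1)) (Fin (N + 1)) ℝ :=
      Matrix.diagonal fun i => if (i : ℕ) = 0 then 0 else -σs
    (A₀ * Q).IsSymm ∧ (-(A₀ * Q)).PosSemidef := by
  intro Q
  have hsym : ∀ i j, A₀ i j = A₀ j i := fun i j => by
    have h := hA₀.isHermitian.apply j i
    simpa using h
  have hval : ∀ i : Fin (N+1), (i : ℕ) = 0 ↔ i = 0 := by
    intro i; rw [Fin.ext_iff, Fin.val_zero]
  have h0 : ∀ j : Fin (N+1), j ≠ 0 → A₀ 0 j = 0 := by
    intro j hj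
    apply hdiag 0 j
    · simp only [Fin.val_zero]; omega
    · exact fun h => hj h.symm
  have h0' : ∀ i : Fin (N+1), i ≠ 0 → A₀ i 0 = 0 := fun i hi =>
    (hsym i 0).trans (h0 i hi)
  have hQ : ∀ i j, (A₀ * Q) i j = A₀ i j * (if j = 0 then 0 else -σs) := by
    intro i j; simp [Q, Matrix.mul_diagonal, hval]
  have hsymQ : (A₀ * Q).IsSymm := by
    ext i j
    simp only [Matrix.transpose_apply, hQ]
    by_cases hi : i = 0 <;> by_cases hj : j = 0
    · subst hi; subst hj; ring
    · subst hi; rw [h0 j hj, hsym j 0, h0 j hj]; simp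
    · subst hj; rw [h0' i hi, hsym 0 i, h0' i hi]; simp
    · rw [hsym j i, if_neg hi, if_neg hj]
  refine ⟨hsymQ, Matrix.posSemidef_iff_dotProduct_mulVec.mpr ⟨?_, ?_⟩⟩
  · have hherm : (A₀ * Q).IsHermitian :=
      (Matrix.conjTranspose_eq_transpose_of_trivial _).trans hsymQ
    exact hherm.neg
  · intro x
    set y : Fin (N+1) → ℝ := fun i => if i = 0 then 0 else x i with hy
    have key : star x ⬝ᵥ ((-(A₀ * Q)) *ᵥ x) = σs * (star y ⬝ᵥ (A₀ *ᵥ y)) := by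
      simp only [star_trivial, dotProduct, Matrix.mulVec, Matrix.neg_apply, dotProduct]
      rw [Finset.mul_sum]
      apply Finset.sum_congr rfl
      intro i _
      by_cases hi : i = 0
      · subst hi
        have hz : ∀ j, A₀ 0 j * y j = 0 := by
          intro j
          by_cases hj : j = 0
          · simp [hy, hj]
          · simp [h0 j hj]
        have hz' : ∀ j : Fin (N+1), -((A₀ * Q) 0 j) * x j = 0 := by
          intro j
          by_cases hj : j = 0
          · simp [hQ, hj]
          · simp [hQ, h0 j hj]
        simp only [hz, hz']
        simp
      · simp only [hy, if_neg hi]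
        rw [Finset.mul_sum, Finset.mul_sum, Finset.mul_sum]
        apply Finset.sum_congr rfl
        intro j _
        by_cases hj : j = 0
        · subst hj; simp [hQ]
        · rw [hQ, if_neg hj, if_neg hj]; ring
    rw [key]
    exact mul_nonneg hσs (hA₀.posSemidef.dotProduct_mulVec_nonneg y)
end

section
/- Suppose P_N closure matrix A (Legendre Jacobi matrix of size (N+1)) and symmetrizer A₀ = diag(1,3,…,2N+1). Then for any eigenvalue λ of A, |λ| ≤ 1. Equivalently, the spectral radius of A is at most 1. -/
open Matrix

lemma pn_ite_sum_le {N : ℕ} (P : Fin (N+1) → Prop) [DecidablePred P]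
    (hP : ∀ j k, P j → P k → j = k) {c : ℝ} (hc : 0 ≤ c) :
    ∑ j, (if P j then c else 0) ≤ c := by
  classical
  rw [← Finset.sum_filter, Finset.sum_const, nsmul_eq_mul]
  have hcard : (Finset.univ.filter P).card ≤ 1 :=
    Finset.card_le_one.mpr (by
      intro a ha b hb
      exact hP a b (Finset.mem_filter.mp ha).2 (Finset.mem_filter.mp hb).2)
  calc ((Finset.univ.filter P).card : ℝ) * c ≤ 1 * c := by
        apply mul_le_mul_of_nonneg_right _ hc
        exact_mod_cast hcard
    _ = c := one_mul c

lemma pn_abs_rowsum_le (N : ℕ) (i : Fin (N + 1)) :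
    ∑ j, |pnMatrix N i j| ≤ 1 := by
  classical
  have hd : (0 : ℝ) < 2 * ((i : ℕ) : ℝ) + 1 := by positivity
  have hc1 : (0 : ℝ) ≤ (((i : ℕ) : ℝ) + 1) / (2 * ((i : ℕ) : ℝ) + 1) := by positivity
  have hc2 : (0 : ℝ) ≤ (((i : ℕ) : ℝ)) / (2 * ((i : ℕ) : ℝ) + 1) := by positivity
  have hle : ∀ j : Fin (N + 1), |pnMatrix N i j| ≤
      (if (j.val = i.val + 1) then (((i : ℕ) : ℝ) + 1) / (2 * ((i : ℕ) : ℝ) + 1) else 0)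
      + (if (i.val = j.val + 1) then (((i : ℕ) : ℝ)) / (2 * ((i : ℕ) : ℝ) + 1) else 0) := by
    intro j
    by_cases h1 : j.val = i.val + 1
    · have h2 : ¬ (i.val = j.val + 1) := by omega
      simp only [pnMatrix, if_pos h1, if_neg h2, add_zero]
      exact le_of_eq (abs_of_nonneg hc1)
    · by_cases h2 : i.val = j.val + 1
      · simp only [pnMatrix, if_pos h2, if_neg h1, zero_add]
        exact le_of_eq (abs_of_nonneg hc2)
      · simp only [pnMatrix, if_neg h1, if_neg h2, add_zero, abs_zero, le_refl]
  calc ∑ j, |pnMatrix N i j|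
      ≤ ∑ j : Fin (N + 1), ((if (j.val = i.val + 1) then (((i : ℕ) : ℝ) + 1) / (2 * ((i : ℕ) : ℝ) + 1) else 0)
        + (if (i.val = j.val + 1) then (((i : ℕ) : ℝ)) / (2 * ((i : ℕ) : ℝ) + 1) else 0)) :=
        Finset.sum_le_sum fun j _ => hle j
    _ = (∑ j : Fin (N + 1), (if (j.val = i.val + 1) then (((i : ℕ) : ℝ) + 1) / (2 * ((i : ℕ) : ℝ) + 1) else 0))
      + (∑ j : Fin (N + 1), (if (i.val = j.val + 1) then (((i : ℕ) : ℝ)) / (2 * ((i : ℕ) : ℝ) + 1) else 0)) :=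
        Finset.sum_add_distrib
    _ ≤ (((i : ℕ) : ℝ) + 1) / (2 * ((i : ℕ) : ℝ) + 1) + (((i : ℕ) : ℝ)) / (2 * ((i : ℕ) : ℝ) + 1) := by
        apply add_le_add
        · exact pn_ite_sum_le _ (fun j k hj hk => Fin.ext (by omega)) hc1
        · exact pn_ite_sum_le _ (fun j k hj hk => Fin.ext (by omega)) hc2
    _ = 1 := by field_simp; ring

/-- Every (complex) eigenvalue `μ` of the `P_N` closure matrix satisfies `|μ| ≤ 1`:
the spectral radius of `A` is at most `1`. -/
theorem pn_spectral_radius_le_one (N : ℕ) :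
    ∀ μ ∈ spectrum ℂ ((pnMatrix N).map (Complex.ofReal)), ‖μ‖ ≤ 1 := by
  classical
  intro μ hμ
  set M := (pnMatrix N).map (Complex.ofReal) with hM
  rw [← AlgEquiv.spectrum_eq (Matrix.toLinAlgEquiv' (R := ℂ) (n := Fin (N+1))),
      ← Module.End.hasEigenvalue_iff_mem_spectrum] at hμ
  obtain ⟨v, hv⟩ := hμ.exists_hasEigenvector
  have hv0 := hv.2
  have heq : M *ᵥ v = μ • v := by
    have := hv.apply_eq_smul
    rwa [Matrix.toLinAlgEquiv'_apply] at this
  obtain ⟨i, hi⟩ := Finset.exists_max_image Finset.univ (fun j => ‖v j‖)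
    ⟨0, Finset.mem_univ 0⟩
  have hi' : ∀ j, ‖v j‖ ≤ ‖v i‖ := fun j => hi.2 j (Finset.mem_univ j)
  have hvi : 0 < ‖v i‖ := by
    by_contra h
    push_neg at h
    apply hv0
    funext j
    have h2 : ‖v j‖ ≤ 0 := le_trans (hi' j) h
    simpa using norm_eq_zero.mp
      (le_antisymm h2 (norm_nonneg _))
  have key : ‖μ‖ * ‖v i‖ ≤ ‖v i‖ := by
    have h1 : μ * v i = ∑ j, M i j * v j := by
      have h2 := congrFun heq i
      simp only [Matrix.mulVec, dotProduct, Pi.smul_apply, smul_eq_mul] at h2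
      exact h2.symm
    calc ‖μ‖ * ‖v i‖ = ‖μ * v i‖ := (norm_mul _ _).symm
      _ = ‖∑ j, M i j * v j‖ := by rw [h1]
      _ ≤ ∑ j, ‖M i j * v j‖ := norm_sum_le _ _
      _ = ∑ j, |pnMatrix N i j| * ‖v j‖ := by
          apply Finset.sum_congr rfl
          intro j _
          rw [norm_mul, hM]
          simp [Matrix.map_apply]
      _ ≤ ∑ j, |pnMatrix N i j| * ‖v i‖ := by
          apply Finset.sum_le_sum
          intro j _
          exact mul_le_mul_of_nonneg_left (hi' j) (abs_nonneg _)
      _ = (∑ j, |pnMatrix N i j|) * ‖v i‖ := by rw [Finset.sum_mul]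
      _ ≤ 1 * ‖v i‖ :=
          mul_le_mul_of_nonneg_right (pn_abs_rowsum_le N i) (norm_nonneg _)
      _ = ‖v i‖ := one_mul _
  exact le_of_mul_le_mul_right (by linarith [key]) hvi
end
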